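/- A finite-dimensional complex Lie algebra admits a periodic derivation if and only if it admits a periodic derivation of order dividing six (i.e., with D^6 = id). -/

import Mathlib

open Complex Polynomial

def hexSetoid : Setoid ℂ where
  r a b := ∃ t : ℂ, t ^ 6 = 1 ∧ b = t * a
  iseqv := by
    refine ⟨fun a => ⟨1, by norm_num⟩, ?_, ?_⟩
    · rintro a b ⟨t, ht, rfl⟩
      have ht0 : t ≠ 0 := by rintro rfl; simp at ht
      exact ⟨t⁻¹, by rw [inv_pow, ht, inv_one],
        by rw [← mul_assoc, inv_mul_cancel₀ ht0, one_mul]⟩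
    · rintro a b c ⟨t, ht, rfl⟩ ⟨s, hs, rfl⟩
      exact ⟨s * t, by rw [mul_pow, ht, hs, mul_one], by ring⟩

noncomputable def hexf (a : ℂ) : ℂ := a / (Quotient.mk hexSetoid a).out

lemma hexf_mul {t : ℂ} (ht : t ^ 6 = 1) (a : ℂ) : hexf (t * a) = t * hexf a := by
  have ht0 : t ≠ 0 := by rintro rfl; simp at ht
  unfold hexf
  rw [Quotient.sound (s := hexSetoid) (a := t * a) (b := a)
    ⟨t⁻¹, by rw [inv_pow, ht, inv_one], by rw [← mul_assoc, inv_mul_cancel₀ ht0, one_mul]⟩]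
  rw [mul_div_assoc]

lemma hexf_pow {a : ℂ} (ha : a ≠ 0) : hexf a ^ 6 = 1 := by
  obtain ⟨t, ht, hta⟩ := Quotient.exact ((Quotient.mk hexSetoid a).out_eq)
  have hout : (Quotient.mk hexSetoid a).out ≠ 0 := by
    rintro h0; rw [h0, mul_zero] at hta; exact ha hta
  have h : hexf a = t := by unfold hexf; rw [div_eq_iff hout]; exact hta
  rw [h, ht]

lemma conj_eq_inv {m : ℕ} (hm : m ≠ 0) {a : ℂ} (ha : a ^ m = 1) :
    (starRingEnd ℂ) a = a⁻¹ := by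
  have ha0 : a ≠ 0 := by rintro rfl; rw [zero_pow hm] at ha; exact one_ne_zero ha.symm
  have habs : ‖a‖ = 1 := by
    have h1 : ‖a‖ ^ m = 1 := by rw [← norm_pow, ha, norm_one]
    rcases lt_trichotomy ‖a‖ 1 with h | h | h
    · exact absurd h1 (by nlinarith [pow_lt_one₀ (norm_nonneg a) h hm])
    · exact h
    · exact absurd h1 (by nlinarith [one_lt_pow₀ h hm])
  apply eq_inv_of_mul_eq_one_right
  rw [Complex.mul_conj]
  norm_cast
  rw [← Complex.sq_norm, habs, one_pow]

lemma hex_add {m : ℕ} (hm : m ≠ 0) {a b : ℂ} (ha : a ^ m = 1) (hb : b ^ m = 1)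
    (hab : (a + b) ^ m = 1) : hexf a + hexf b = hexf (a + b) := by
  have ha0 : a ≠ 0 := by rintro rfl; rw [zero_pow hm] at ha; exact one_ne_zero ha.symm
  have hb0 : b ≠ 0 := by rintro rfl; rw [zero_pow hm] at hb; exact one_ne_zero hb.symm
  have hab0 : a + b ≠ 0 := by
    intro h0; rw [h0, zero_pow hm] at hab; exact one_ne_zero hab.symm
  have h1 := conj_eq_inv hm ha
  have h2 := conj_eq_inv hm hb
  have h3 := conj_eq_inv hm hab
  rw [map_add, h1, h2] at h3
  -- a⁻¹ + b⁻¹ = (a+b)⁻¹  ⟹  a² + ab + b² = 0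
  have key : a ^ 2 + a * b + b ^ 2 = 0 := by
    field_simp at h3
    linear_combination h3
  set t : ℂ := b / a with htdef
  have hat : t * a = b := div_mul_cancel₀ b ha0
  have ht2 : t ^ 2 + t + 1 = 0 := by
    have h2 : a ^ 2 * (t ^ 2 + t + 1) = 0 := by
      linear_combination key + (t * a + b + a) * hat
    exact (mul_eq_zero.mp h2).resolve_left (pow_ne_zero 2 ha0)
  have ht3 : t ^ 3 = 1 := by linear_combination (t - 1) * ht2
  have ht6 : t ^ 6 = 1 := by rw [show (6:ℕ) = 3*2 by rfl, pow_mul, ht3, one_pow]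
  have hbta : b = t * a := hat.symm
  have habt : a + b = (-t^2) * a := by rw [hbta]; linear_combination a * ht2
  have hmt6 : (-t^2) ^ 6 = 1 := by
    rw [neg_pow, ← pow_mul]
    norm_num
    rw [show (12:ℕ) = 3*4 by rfl, pow_mul, ht3, one_pow]
  rw [habt, hbta, hexf_mul ht6, hexf_mul hmt6]
  have : (-t^2) = 1 + t := by linear_combination -ht2
  rw [this]; ring
theorem periodic_iff_order_dividing_six (L : Type*) [LieRing L] [LieAlgebra ℂ L]
    [FiniteDimensional ℂ L] :
    (∃ D : LieDerivation ℂ L L, ∃ m : ℕ, 1 ≤ m ∧ D.toLinearMap ^ m = 1) ↔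
    (∃ D : LieDerivation ℂ L L, D.toLinearMap ^ 6 = 1) := by
  constructor
  · rintro ⟨D, m, hm1, hDm⟩
    have hm : m ≠ 0 := by omega
    set f : Module.End ℂ L := D.toLinearMap with hf
    -- f is semisimple: annihilated by the squarefree polynomial X^m - 1
    have hsq : Squarefree (Polynomial.X ^ m - 1 : Polynomial ℂ) :=
      (Polynomial.X_pow_sub_one_separable_iff.mpr (by exact_mod_cast hm)).squarefree
    have haev : Polynomial.aeval f (Polynomial.X ^ m - 1 : Polynomial ℂ) = 0 := by
      rw [map_sub, map_pow, Polynomial.aeval_X, map_one, hDm, sub_self]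
    have hss : f.IsSemisimple := Module.End.isSemisimple_of_squarefree_aeval_eq_zero hsq haev
    have hsup : ⨆ μ : ℂ, f.eigenspace μ = ⊤ := by
      have h1 := Module.End.iSup_maxGenEigenspace_eq_top f
      have h2 := hss.isFinitelySemisimple.maxGenEigenspace_eq_eigenspace
      simp_rw [h2] at h1
      exact h1
    have hmem : ∀ x : L, x ∈ ⨆ μ : ℂ, f.eigenspace μ := by
      intro x; rw [hsup]; trivial
    -- eigenvalues are m-th roots of unity
    have hval : ∀ (μ : ℂ) (x : L), x ∈ f.eigenspace μ → x ≠ 0 → μ ^ m = 1 := by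
      intro μ x hx hx0
      have h := Module.End.aeval_apply_of_hasEigenvector (p := (Polynomial.X : Polynomial ℂ) ^ m) ⟨hx, hx0⟩
      rw [map_pow, Polynomial.aeval_X, hDm, Polynomial.eval_pow, Polynomial.eval_X, Module.End.one_apply] at h
      have h' : (μ ^ m - 1) • x = 0 := by rw [sub_smul, one_smul, ← h, sub_self]
      rcases smul_eq_zero.mp h' with h'' | h''
      · exact sub_eq_zero.mp h''
      · exact absurd h'' hx0
    have hval' : ∀ (μ : ℂ) (x : L), x ∈ f.eigenspace μ → x ≠ 0 → μ ≠ 0 := by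
      intro μ x hx hx0 h0
      have := hval μ x hx hx0
      rw [h0, zero_pow hm] at this
      exact one_ne_zero this.symm
    -- interpolation polynomial
    set S : Finset ℂ := (Polynomial.nthRoots m (1 : ℂ)).toFinset with hSdef
    have hS : ∀ z : ℂ, z ^ m = 1 → z ∈ S := by
      intro z hz
      rw [hSdef, Multiset.mem_toFinset, Polynomial.mem_nthRoots (by omega : 0 < m)]
      exact hz
    set p : Polynomial ℂ := Lagrange.interpolate S id hexf with hpdef
    have hp : ∀ z ∈ S, p.eval z = hexf z := by
      intro z hz
      exact Lagrange.eval_interpolate_at_node hexf (Set.injOn_id _) hz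
    set g : Module.End ℂ L := Polynomial.aeval f p with hgdef
    have hgx : ∀ (q : Polynomial ℂ) (μ : ℂ) (x : L), x ∈ f.eigenspace μ →
        Polynomial.aeval f q x = q.eval μ • x := by
      intro q μ x hx
      rcases eq_or_ne x 0 with rfl | hx0
      · simp
      · exact Module.End.aeval_apply_of_hasEigenvector ⟨hx, hx0⟩
    -- the bracket of eigenvectors is an eigenvector
    have hbr : ∀ (μ ν : ℂ) (x y : L), x ∈ f.eigenspace μ → y ∈ f.eigenspace ν →
        ⁅x, y⁆ ∈ f.eigenspace (μ + ν) := by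
      intro μ ν x y hx hy
      rw [Module.End.mem_eigenspace_iff] at hx hy ⊢
      have h : f ⁅x, y⁆ = ⁅x, f y⁆ + ⁅f x, y⁆ := D.apply_lie_eq_add x y
      rw [h, hx, hy, lie_smul, smul_lie, add_smul]
      abel
    -- Leibniz on eigenvectors
    have key : ∀ (μ ν : ℂ) (x y : L), x ∈ f.eigenspace μ → y ∈ f.eigenspace ν →
        g ⁅x, y⁆ = ⁅g x, y⁆ + ⁅x, g y⁆ := by
      intro μ ν x y hx hy
      have hxy := hbr μ ν x y hx hy
      rw [hgdef, hgx p (μ + ν) _ hxy, hgx p μ x hx, hgx p ν y hy, smul_lie, lie_smul]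
      rcases eq_or_ne ⁅x, y⁆ 0 with h0 | h0
      · rw [h0]; simp
      · have hx0 : x ≠ 0 := by rintro rfl; rw [zero_lie] at h0; exact h0 rfl
        have hy0 : y ≠ 0 := by rintro rfl; rw [lie_zero] at h0; exact h0 rfl
        have hμ := hval μ x hx hx0
        have hν := hval ν y hy hy0
        have hμν := hval (μ + ν) _ hxy h0
        rw [hp μ (hS μ hμ), hp ν (hS ν hν), hp (μ + ν) (hS _ hμν),
          ← hex_add hm hμ hν hμν, add_smul]
    have leib : ∀ x y : L, g ⁅x, y⁆ = ⁅g x, y⁆ + ⁅x, g y⁆ := by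
      intro x y
      refine Submodule.iSup_induction (x := x) (motive := fun x => ∀ y : L,
        g ⁅x, y⁆ = ⁅g x, y⁆ + ⁅x, g y⁆) _ (hmem x) ?_ (by simp) ?_ y
      · intro μ x hx
        intro y
        refine Submodule.iSup_induction (x := y) (motive := fun y =>
          g ⁅x, y⁆ = ⁅g x, y⁆ + ⁅x, g y⁆) _ (hmem y) ?_ (by simp) ?_
        · intro ν y hy; exact key μ ν x y hx hy
        · intro y z h1 h2; rw [lie_add, map_add, h1, h2, map_add, lie_add, lie_add]; abel
      · intro a b h1 h2 y; rw [add_lie, map_add, h1 y, h2 y, map_add, add_lie, add_lie]; abel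
    refine ⟨⟨g, fun a b => ?_⟩, ?_⟩
    · -- leibniz' in subtraction form
      rw [leib a b, ← lie_skew b (g a)]
      abel
    · -- g ^ 6 = 1
      show g ^ 6 = 1
      apply LinearMap.ext
      intro x
      refine Submodule.iSup_induction (x := x) (motive := fun x => (g ^ 6) x = (1 : Module.End ℂ L) x)
        _ (hmem x) ?_ (by simp) ?_
      · intro μ x hx
        rcases eq_or_ne x 0 with rfl | hx0
        · simp
        · have hμ := hval μ x hx hx0
          have hμ0 := hval' μ x hx hx0
          have h6 : g ^ 6 = Polynomial.aeval f (p ^ 6) := by rw [map_pow]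
          rw [Module.End.one_apply, h6, hgx (p ^ 6) μ x hx, Polynomial.eval_pow, hp μ (hS μ hμ),
            hexf_pow hμ0, one_smul]
      · intro a b h1 h2; rw [map_add, map_add, h1, h2]
  · rintro ⟨D, h⟩
    exact ⟨D, 6, by norm_num, h⟩
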